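/- For all n ≥ 1 and k ≥ 0, the number of permutations of length n avoiding both 213 and 312 with exactly k ascents equals C(n−1, k), and the number of such permutations with exactly k descents also equals C(n−1, k). -/

import Mathlib

set_option maxRecDepth 4000


open scoped Classical

/-- The word `π₁π₂⋯π_n` of a permutation of `{1,…,n}`, with values in `{1,…,n}`. -/
def permWord {n : ℕ} (π : Equiv.Perm (Fin n)) : List ℕ :=
  List.ofFn fun i => (π i : ℕ) + 1

/-- The word `l` contains the word `ρ` as a (classical) pattern. -/
def ContainsPat (l ρ : List ℕ) : Prop :=
  ∃ f : Fin ρ.length → Fin l.length, StrictMono f ∧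
    ∀ a b : Fin ρ.length, ρ.get a < ρ.get b ↔ l.get (f a) < l.get (f b)

/-- `l` avoids every pattern in the list `B`. -/
def AvoidsAll (l : List ℕ) (B : List (List ℕ)) : Prop :=
  ∀ ρ ∈ B, ¬ ContainsPat l ρ

/-- Number of ascents of the word `l`. -/
def ascents (l : List ℕ) : ℕ :=
  ((Finset.range (l.length - 1)).filter fun i => l.getD i 0 < l.getD (i + 1) 0).card

/-- Number of descents of the word `l`. -/
def descents (l : List ℕ) : ℕ :=
  ((Finset.range (l.length - 1)).filter fun i => l.getD (i + 1) 0 < l.getD i 0).card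

/-- Number of double ascents of the word `l`. -/
def dascents (l : List ℕ) : ℕ :=
  ((Finset.range (l.length - 2)).filter fun i =>
    l.getD i 0 < l.getD (i + 1) 0 ∧ l.getD (i + 1) 0 < l.getD (i + 2) 0).card

/-- Number of double descents of the word `l`. -/
def ddescents (l : List ℕ) : ℕ :=
  ((Finset.range (l.length - 2)).filter fun i =>
    l.getD (i + 1) 0 < l.getD i 0 ∧ l.getD (i + 2) 0 < l.getD (i + 1) 0).card

/-- Number of peaks of the word `l`. -/
def peaks (l : List ℕ) : ℕ :=
  ((Finset.range (l.length - 2)).filter fun i =>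
    l.getD i 0 < l.getD (i + 1) 0 ∧ l.getD (i + 2) 0 < l.getD (i + 1) 0).card

/-- Number of valleys of the word `l`. -/
def valleys (l : List ℕ) : ℕ :=
  ((Finset.range (l.length - 2)).filter fun i =>
    l.getD (i + 1) 0 < l.getD i 0 ∧ l.getD (i + 1) 0 < l.getD (i + 2) 0).card

/-- `acount n k stat B` is the number of permutations of `{1,…,n}` avoiding all
patterns in `B` whose statistic `stat` equals `k`. -/
noncomputable def acount (n k : ℕ) (stat : List ℕ → ℕ) (B : List (List ℕ)) : ℕ :=
  (Finset.univ.filter fun π : Equiv.Perm (Fin n) =>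
    AvoidsAll (permWord π) B ∧ stat (permWord π) = k).card

lemma permWord_length {n : ℕ} (π : Equiv.Perm (Fin n)) : (permWord π).length = n := by
  simp [permWord]

lemma permWord_get {n : ℕ} (π : Equiv.Perm (Fin n)) (i : Fin (permWord π).length) :
    (permWord π).get i = (π (Fin.cast (permWord_length π) i) : ℕ) + 1 := by
  simp [permWord]
  exact List.getElem_ofFn (f := fun i => (π i : ℕ) + 1) (i := i.val) i.isLt

lemma of_contains213 {n : ℕ} (π : Equiv.Perm (Fin n))
    (h : ContainsPat (permWord π) [2,1,3]) :
    ∃ i j k : Fin n, i < j ∧ j < k ∧ π j < π i ∧ π j < π k := by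
  obtain ⟨f, hf, hiff⟩ := h
  set e : Fin (permWord π).length → Fin n := Fin.cast (permWord_length π) with he
  refine ⟨e (f ⟨0, by simp⟩), e (f ⟨1, by simp⟩), e (f ⟨2, by simp⟩), ?_, ?_, ?_, ?_⟩
  · exact hf (by decide)
  · exact hf (by decide)
  · have := (hiff ⟨1, by simp⟩ ⟨0, by simp⟩).mp (by decide)
    simp only [permWord_get] at this
    simpa using this
  · have := (hiff ⟨1, by simp⟩ ⟨2, by simp⟩).mp (by decide)
    simp only [permWord_get] at this
    simpa using this

lemma of_contains312 {n : ℕ} (π : Equiv.Perm (Fin n))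
    (h : ContainsPat (permWord π) [3,1,2]) :
    ∃ i j k : Fin n, i < j ∧ j < k ∧ π j < π i ∧ π j < π k := by
  obtain ⟨f, hf, hiff⟩ := h
  set e : Fin (permWord π).length → Fin n := Fin.cast (permWord_length π) with he
  refine ⟨e (f ⟨0, by simp⟩), e (f ⟨1, by simp⟩), e (f ⟨2, by simp⟩), ?_, ?_, ?_, ?_⟩
  · exact hf (by decide)
  · exact hf (by decide)
  · have := (hiff ⟨1, by simp⟩ ⟨0, by simp⟩).mp (by decide)
    simp only [permWord_get] at this
    simpa using this
  · have := (hiff ⟨1, by simp⟩ ⟨2, by simp⟩).mp (by decide)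
    simp only [permWord_get] at this
    simpa using this

def tri {α : Type*} (x y z : α) : Fin 3 → α
  | ⟨0,_⟩ => x
  | ⟨1,_⟩ => y
  | ⟨2,_⟩ => z

@[simp] lemma tri0 {α : Type*} (x y z : α) (h : 0 < 3) : tri x y z ⟨0,h⟩ = x := rfl
@[simp] lemma tri1 {α : Type*} (x y z : α) (h : 1 < 3) : tri x y z ⟨1,h⟩ = y := rfl
@[simp] lemma tri2 {α : Type*} (x y z : α) (h : 2 < 3) : tri x y z ⟨2,h⟩ = z := rfl

lemma permWord_get' {n : ℕ} (π : Equiv.Perm (Fin n)) (x : Fin n) :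
    (permWord π).get (Fin.cast (permWord_length π).symm x) = (π x : ℕ) + 1 := by
  rw [permWord_get]
  congr 1

lemma contains_aux {n : ℕ} (π : Equiv.Perm (Fin n)) {i j k : Fin n} (u v w : ℕ)
    (hij : i < j) (hjk : j < k)
    (huv : u < v ↔ π i < π j) (hvu : v < u ↔ π j < π i)
    (huw : u < w ↔ π i < π k) (hwu : w < u ↔ π k < π i)
    (hvw : v < w ↔ π j < π k) (hwv : w < v ↔ π k < π j) :
    ContainsPat (permWord π) [u,v,w] := by
  simp only [Fin.lt_def] at hij hjk
  refine ⟨tri (Fin.cast (permWord_length π).symm i) (Fin.cast (permWord_length π).symm j)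
    (Fin.cast (permWord_length π).symm k), ?_, ?_⟩
  · intro a b hab
    obtain ⟨a, ha⟩ := a
    obtain ⟨b, hb⟩ := b
    have ha3 : a < 3 := ha
    have hb3 : b < 3 := hb
    simp only [Fin.mk_lt_mk] at hab
    interval_cases a <;> interval_cases b <;>
      simp only [tri0, tri1, tri2, Fin.lt_def, Fin.coe_cast] <;> omega
  · intro a b
    obtain ⟨a, ha⟩ := a
    obtain ⟨b, hb⟩ := b
    have ha3 : a < 3 := ha
    have hb3 : b < 3 := hb
    simp only [Fin.lt_def] at huv hvu huw hwu hvw hwv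
    interval_cases a <;> interval_cases b <;>
      simp only [tri0, tri1, tri2, permWord_get', List.get] <;> omega

def Qprop {n : ℕ} (π : Equiv.Perm (Fin n)) : Prop :=
  ∀ i j k : Fin n, i < j → j < k → π j < π i → ¬ π j < π k

lemma avoid_iff {n : ℕ} (π : Equiv.Perm (Fin n)) :
    AvoidsAll (permWord π) [[2,1,3],[3,1,2]] ↔ Qprop π := by
  constructor
  · intro hav i j k hij hjk h1 h2
    rcases lt_trichotomy (π i) (π k) with h|h|h
    · exact hav [2,1,3] (by simp) (contains_aux π 2 1 3 hij hjk
        (iff_of_false (by omega) (asymm h1)) (iff_of_true (by omega) h1)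
        (iff_of_true (by omega) h) (iff_of_false (by omega) (asymm h))
        (iff_of_true (by omega) h2) (iff_of_false (by omega) (asymm h2)))
    · exact absurd (π.injective h) (by intro hh; subst hh; exact absurd (hij.trans hjk) (lt_irrefl _))
    · exact hav [3,1,2] (by simp) (contains_aux π 3 1 2 hij hjk
        (iff_of_false (by omega) (asymm h1)) (iff_of_true (by omega) h1)
        (iff_of_false (by omega) (asymm h)) (iff_of_true (by omega) h)
        (iff_of_true (by omega) h2) (iff_of_false (by omega) (asymm h2)))
  · intro hQ ρ hρ hc
    simp only [List.mem_cons, List.mem_singleton, List.not_mem_nil, or_false] at hρ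
    rcases hρ with rfl|rfl
    · obtain ⟨i,j,k,hij,hjk,h1,h2⟩ := of_contains213 π hc
      exact hQ i j k hij hjk h1 h2
    · obtain ⟨i,j,k,hij,hjk,h1,h2⟩ := of_contains312 π hc
      exact hQ i j k hij hjk h1 h2

def Uni {m : ℕ} (π : Equiv.Perm (Fin (m+1))) : Prop :=
  (∀ i j : Fin (m+1), i < j → j ≤ π.symm (Fin.last m) → π i < π j) ∧
  (∀ i j : Fin (m+1), π.symm (Fin.last m) ≤ i → i < j → π j < π i)

lemma Q_iff_uni {m : ℕ} (π : Equiv.Perm (Fin (m+1))) : Qprop π ↔ Uni π := by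
  set M := π.symm (Fin.last m) with hM
  have hπM : π M = Fin.last m := π.apply_symm_apply _
  have hne : ∀ x : Fin (m+1), x ≠ M → π x < Fin.last m := by
    intro x hx
    refine lt_of_le_of_ne (Fin.le_last _) ?_
    intro h
    exact hx (by rw [← hπM] at h; exact π.injective h)
  constructor
  · intro hQ
    constructor
    · intro i j hij hjM
      rcases eq_or_lt_of_le hjM with rfl|hjM
      · rw [hπM]; exact hne i (by intro h; subst h; exact absurd hij (lt_irrefl _))
      · by_contra hc
        have hne2 : π i ≠ π j := fun h => absurd (π.injective h)
          (by intro h; subst h; exact absurd hij (lt_irrefl _))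
        have h1 : π j < π i := lt_of_le_of_ne (not_lt.mp hc) (Ne.symm hne2)
        exact hQ i j M hij hjM h1
          (by rw [hπM]; exact hne j (by intro h; subst h; exact absurd hjM (lt_irrefl _)))
    · intro i j hMi hij
      rcases eq_or_lt_of_le hMi with rfl|hMi
      · rw [hπM]; exact hne j (by intro h; subst h; exact absurd hij (lt_irrefl _))
      · by_contra hc
        have hne2 : π i ≠ π j := fun h => absurd (π.injective h)
          (by intro h; subst h; exact absurd hij (lt_irrefl _))
        have h1 : π i < π j := lt_of_le_of_ne (not_lt.mp hc) hne2
        exact hQ M i j hMi hij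
          (by rw [hπM]; exact hne i (by intro h; subst h; exact absurd hMi (lt_irrefl _))) h1
  · rintro ⟨hL, hR⟩ i j k hij hjk h1 h2
    rcases lt_trichotomy j M with h|rfl|h
    · exact absurd (hL i j hij h.le) (asymm h1)
    · rw [hπM] at h1
      exact absurd h1 (not_lt.mpr (Fin.le_last _))
    · exact absurd (hR j k h.le hjk) (asymm h2)

lemma permWord_getD {n : ℕ} (π : Equiv.Perm (Fin n)) (i : ℕ) (h : i < n) :
    (permWord π).getD i 0 = (π ⟨i, h⟩ : ℕ) + 1 := by
  rw [List.getD_eq_getElem _ _ (by simpa [permWord_length] using h)]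
  simp [permWord]

lemma ascents_uni {m : ℕ} (π : Equiv.Perm (Fin (m+1))) (h : Uni π) :
    ascents (permWord π) = (π.symm (Fin.last m) : ℕ) := by
  set M := π.symm (Fin.last m) with hM
  have hMm : (M : ℕ) ≤ m := Nat.lt_succ_iff.mp M.isLt
  have : ((Finset.range ((permWord π).length - 1)).filter
      fun i => (permWord π).getD i 0 < (permWord π).getD (i + 1) 0) = Finset.range (M : ℕ) := by
    ext x
    simp only [Finset.mem_filter, Finset.mem_range, permWord_length]
    constructor
    · rintro ⟨hx, hasc⟩
      have hx1 : x < m + 1 := by omega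
      have hx2 : x + 1 < m + 1 := by omega
      rw [permWord_getD π x hx1, permWord_getD π (x+1) hx2] at hasc
      by_contra hc
      have : π (⟨x+1, hx2⟩ : Fin (m+1)) < π ⟨x, hx1⟩ :=
        h.2 ⟨x, hx1⟩ ⟨x+1, hx2⟩ (by simp only [Fin.le_def, Fin.val_mk]; omega) (by simp [Fin.lt_def])
      rw [Fin.lt_def] at this
      omega
    · intro hx
      have hxm : x < m := by omega
      have hx1 : x < m + 1 := by omega
      have hx2 : x + 1 < m + 1 := by omega
      refine ⟨by omega, ?_⟩
      rw [permWord_getD π x hx1, permWord_getD π (x+1) hx2]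
      have : π (⟨x, hx1⟩ : Fin (m+1)) < π ⟨x+1, hx2⟩ :=
        h.1 ⟨x, hx1⟩ ⟨x+1, hx2⟩ (by simp [Fin.lt_def]) (by simp only [Fin.le_def, Fin.val_mk]; omega)
      rw [Fin.lt_def] at this
      omega
  rw [ascents, this, Finset.card_range]

noncomputable def Phi {m : ℕ} (π : Equiv.Perm (Fin (m+1))) : Finset (Fin (m+1)) :=
  Finset.univ.filter fun v => π.symm v < π.symm (Fin.last m)

lemma Phi_eq_image {m : ℕ} (π : Equiv.Perm (Fin (m+1))) :
    Phi π = (Finset.Iio (π.symm (Fin.last m))).image π := by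
  ext v
  simp only [Phi, Finset.mem_filter, Finset.mem_univ, true_and, Finset.mem_image,
    Finset.mem_Iio]
  constructor
  · intro h
    exact ⟨π.symm v, h, π.apply_symm_apply v⟩
  · rintro ⟨i, hi, rfl⟩
    rwa [π.symm_apply_apply]

lemma Phi_card {m : ℕ} (π : Equiv.Perm (Fin (m+1))) :
    (Phi π).card = (π.symm (Fin.last m) : ℕ) := by
  rw [Phi_eq_image, Finset.card_image_of_injective _ π.injective, Fin.card_Iio]

lemma Phi_subset {m : ℕ} (π : Equiv.Perm (Fin (m+1))) :
    Phi π ⊆ Finset.univ.erase (Fin.last m) := by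
  intro v hv
  simp only [Phi, Finset.mem_filter, Finset.mem_univ, true_and] at hv
  simp only [Finset.mem_erase, Finset.mem_univ, and_true]
  intro h
  subst h
  exact absurd hv (lt_irrefl _)

lemma scard_le {m : ℕ} {s : Finset (Fin (m+1))} (hs : s ⊆ Finset.univ.erase (Fin.last m)) :
    s.card ≤ m := by
  have := Finset.card_le_card hs
  simpa [Finset.card_erase_of_mem] using this

lemma tcard {m : ℕ} (s : Finset (Fin (m+1))) (hs : s ⊆ Finset.univ.erase (Fin.last m)) :
    ((Finset.univ.erase (Fin.last m)) \ s).card = m - s.card := by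
  rw [Finset.card_sdiff_of_subset hs]
  simp [Finset.card_erase_of_mem]

lemma lt_last_of_ne {m : ℕ} {x : Fin (m+1)} (h : x ≠ Fin.last m) : x < Fin.last m :=
  lt_of_le_of_ne (Fin.le_last _) h

def bpFun {m : ℕ} (s : Finset (Fin (m+1))) (hs : s ⊆ Finset.univ.erase (Fin.last m)) :
    Fin (m+1) → Fin (m+1) := fun p =>
  if h : p.val < s.card then s.orderEmbOfFin rfl ⟨p.val, h⟩
  else if h2 : p.val = s.card then Fin.last m
  else ((Finset.univ.erase (Fin.last m)) \ s).orderEmbOfFin (tcard s hs)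
    ⟨m - p.val, by have := p.isLt; omega⟩

lemma bpFun_inj {m : ℕ} (s : Finset (Fin (m+1))) (hs : s ⊆ Finset.univ.erase (Fin.last m)) :
    Function.Injective (bpFun s hs) := by
  have hlast_s : Fin.last m ∉ s := by
    intro h
    simpa using hs h
  have hmem_t : ∀ x, ((Finset.univ.erase (Fin.last m)) \ s).orderEmbOfFin (tcard s hs) x ∈
      (Finset.univ.erase (Fin.last m)) \ s := fun x => Finset.orderEmbOfFin_mem _ _ _
  intro p q h
  unfold bpFun at h
  split_ifs at h with h1 h2 h3 h4 h5 h6 h7 h8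
  · have := (s.orderEmbOfFin rfl).injective h
    exact Fin.ext (by simpa [Fin.mk.injEq] using this)
  · exact absurd (h ▸ Finset.orderEmbOfFin_mem s rfl _) hlast_s
  · have := hmem_t ⟨m - q.val, by have := q.isLt; omega⟩
    rw [← h] at this
    simp only [Finset.mem_sdiff] at this
    exact absurd (Finset.orderEmbOfFin_mem s rfl _) this.2
  · exact absurd (h.symm ▸ Finset.orderEmbOfFin_mem s rfl _) hlast_s
  · exact Fin.ext (by omega)
  · have := hmem_t ⟨m - q.val, by have := q.isLt; omega⟩
    rw [← h] at this
    simp only [Finset.mem_sdiff, Finset.mem_erase] at this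
    exact absurd rfl this.1.1
  · have := hmem_t ⟨m - p.val, by have := p.isLt; omega⟩
    rw [h] at this
    simp only [Finset.mem_sdiff] at this
    exact absurd (Finset.orderEmbOfFin_mem s rfl _) this.2
  · have := hmem_t ⟨m - p.val, by have := p.isLt; omega⟩
    rw [h] at this
    simp only [Finset.mem_sdiff, Finset.mem_erase] at this
    exact absurd rfl this.1.1
  · have := (((Finset.univ.erase (Fin.last m)) \ s).orderEmbOfFin (tcard s hs)).injective h
    have hv : m - p.val = m - q.val := by simpa [Fin.mk.injEq] using this
    have hp := p.isLt
    have hq := q.isLt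
    exact Fin.ext (by omega)

noncomputable def bp {m : ℕ} (s : Finset (Fin (m+1))) (hs : s ⊆ Finset.univ.erase (Fin.last m)) :
    Equiv.Perm (Fin (m+1)) :=
  Equiv.ofBijective (bpFun s hs) (Finite.injective_iff_bijective.mp (bpFun_inj s hs))

lemma bp_apply {m : ℕ} (s : Finset (Fin (m+1))) (hs : s ⊆ Finset.univ.erase (Fin.last m))
    (p : Fin (m+1)) : bp s hs p = bpFun s hs p := rfl

lemma bp_symm_last {m : ℕ} (s : Finset (Fin (m+1))) (hs : s ⊆ Finset.univ.erase (Fin.last m)) :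
    (bp s hs).symm (Fin.last m) = ⟨s.card, by have := scard_le hs; omega⟩ := by
  rw [Equiv.symm_apply_eq, bp_apply]
  unfold bpFun
  rw [dif_neg (by simp), dif_pos rfl]

lemma bp_uni {m : ℕ} (s : Finset (Fin (m+1))) (hs : s ⊆ Finset.univ.erase (Fin.last m)) :
    Uni (bp s hs) := by
  have hM : (bp s hs).symm (Fin.last m) = ⟨s.card, by have := scard_le hs; omega⟩ :=
    bp_symm_last s hs
  have hsmem : ∀ x, s.orderEmbOfFin rfl x ∈ s := fun x => Finset.orderEmbOfFin_mem s rfl x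
  have htmem : ∀ x, ((Finset.univ.erase (Fin.last m)) \ s).orderEmbOfFin (tcard s hs) x ∈
      (Finset.univ.erase (Fin.last m)) \ s := fun x => Finset.orderEmbOfFin_mem _ _ _
  constructor
  · intro i j hij hjM
    rw [hM, Fin.le_def] at hjM
    have hjM' : (j:ℕ) ≤ s.card := hjM
    rw [Fin.lt_def] at hij
    rw [bp_apply, bp_apply]
    unfold bpFun
    have hi : i.val < s.card := by omega
    rw [dif_pos hi]
    rcases eq_or_lt_of_le hjM' with hj|hj
    · rw [dif_neg (by omega), dif_pos hj]
      refine lt_last_of_ne ?_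
      intro h
      exact absurd (h ▸ hsmem ⟨i.val, hi⟩) (by intro hh; simpa using hs hh)
    · rw [dif_pos hj]
      exact (s.orderEmbOfFin rfl).strictMono (show (⟨i.val, hi⟩ : Fin s.card) < ⟨j.val, hj⟩ from hij)
  · intro i j hMi hij
    rw [hM, Fin.le_def] at hMi
    have hMi' : s.card ≤ (i:ℕ) := hMi
    rw [Fin.lt_def] at hij
    rw [bp_apply, bp_apply]
    unfold bpFun
    have hj2 : ¬ j.val < s.card := by omega
    have hj3 : ¬ j.val = s.card := by omega
    rw [dif_neg hj2, dif_neg hj3]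
    rcases eq_or_lt_of_le hMi' with hi|hi
    · rw [dif_neg (by omega), dif_pos hi.symm]
      refine lt_last_of_ne ?_
      intro h
      have := h ▸ htmem ⟨m - j.val, by have := j.isLt; omega⟩
      simp only [Finset.mem_sdiff, Finset.mem_erase] at this
      exact this.1.1 rfl
    · rw [dif_neg (by omega), dif_neg (by omega)]
      refine (((Finset.univ.erase (Fin.last m)) \ s).orderEmbOfFin (tcard s hs)).strictMono ?_
      rw [Fin.mk_lt_mk]
      have := j.isLt
      omega

lemma bp_phi {m : ℕ} (s : Finset (Fin (m+1))) (hs : s ⊆ Finset.univ.erase (Fin.last m)) :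
    Phi (bp s hs) = s := by
  have hM := bp_symm_last s hs
  ext v
  simp only [Phi, Finset.mem_filter, Finset.mem_univ, true_and, hM]
  constructor
  · intro hv
    rw [Fin.lt_def] at hv
    have hv1 : ((bp s hs).symm v).val < s.card := hv
    have : v = bp s hs ((bp s hs).symm v) := ((bp s hs).apply_symm_apply v).symm
    rw [this, bp_apply]
    unfold bpFun
    rw [dif_pos hv1]
    exact Finset.orderEmbOfFin_mem s rfl _
  · intro hv
    have : v ∈ Set.range (s.orderEmbOfFin rfl) := by
      rw [Finset.range_orderEmbOfFin]
      exact hv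
    obtain ⟨x, hx⟩ := this
    have hxm : x.val < m + 1 := by have := x.isLt; have := scard_le hs; omega
    have : bp s hs ⟨x.val, hxm⟩ = v := by
      rw [bp_apply]
      unfold bpFun
      rw [dif_pos (show (⟨x.val, hxm⟩ : Fin (m+1)).val < s.card from x.isLt)]
      rw [← hx]
    rw [← this, Equiv.symm_apply_apply, Fin.lt_def]
    exact x.isLt

lemma uni_eq_bp {m : ℕ} (π : Equiv.Perm (Fin (m+1))) (hπ : Uni π) :
    π = bp (Phi π) (Phi_subset π) := by
  have hc : (Phi π).card = ((π.symm (Fin.last m)) : ℕ) := Phi_card π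
  have hcm : (Phi π).card ≤ m := scard_le (Phi_subset π)
  have fmem : ∀ x : Fin (Phi π).card, π ⟨x.val, by have := x.isLt; omega⟩ ∈ Phi π := by
    intro x
    simp only [Phi, Finset.mem_filter, Finset.mem_univ, true_and, Equiv.symm_apply_apply,
      Fin.lt_def]
    have := x.isLt
    omega
  have fmono : StrictMono (fun x : Fin (Phi π).card => π ⟨x.val, by have := x.isLt; omega⟩) := by
    intro x y hxy
    refine hπ.1 _ _ ?_ ?_
    · rw [Fin.lt_def]; exact hxy
    · rw [Fin.le_def]; simp only [Fin.val_mk]; have := y.isLt; omega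
  have hf := Finset.orderEmbOfFin_unique (rfl : (Phi π).card = (Phi π).card) fmem fmono
  set T : Finset (Fin (m+1)) := (Finset.univ.erase (Fin.last m)) \ Phi π with hT
  have htc : T.card = m - (Phi π).card := tcard _ (Phi_subset π)
  have gmem : ∀ x : Fin (m - (Phi π).card),
      π ⟨m - x.val, by have := x.isLt; omega⟩ ∈ T := by
    intro x
    have hx := x.isLt
    have hgt : (Phi π).card < m - x.val := by omega
    simp only [hT, Finset.mem_sdiff, Finset.mem_erase, Finset.mem_univ, and_true, Phi,
      Finset.mem_filter, true_and, Equiv.symm_apply_apply, Fin.lt_def]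
    constructor
    · intro h
      have : (⟨m - x.val, by omega⟩ : Fin (m+1)) = π.symm (Fin.last m) := by
        rw [Equiv.eq_symm_apply]; exact h
      have := congrArg Fin.val this
      simp only [Fin.val_mk] at this
      omega
    · omega
  have gmono : StrictMono (fun x : Fin (m - (Phi π).card) =>
      π ⟨m - x.val, by have := x.isLt; omega⟩) := by
    intro x y hxy
    have hx := x.isLt
    have hy := y.isLt
    refine hπ.2 _ _ ?_ ?_
    · rw [Fin.le_def]; simp only [Fin.val_mk]; omega
    · rw [Fin.lt_def]; simp only [Fin.val_mk]; omega
  have hg := Finset.orderEmbOfFin_unique htc gmem gmono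
  apply Equiv.ext
  intro p
  rcases lt_trichotomy p.val (Phi π).card with h|h|h
  · rw [bp_apply]
    unfold bpFun
    rw [dif_pos h]
    exact congrFun hf ⟨p.val, h⟩
  · rw [bp_apply]
    unfold bpFun
    rw [dif_neg (by omega), dif_pos h]
    have hp : p = π.symm (Fin.last m) := Fin.ext (by omega)
    rw [hp, Equiv.apply_symm_apply]
  · rw [bp_apply]
    unfold bpFun
    rw [dif_neg (by omega), dif_neg (by omega)]
    have hple := p.isLt
    have := congrFun hg ⟨m - p.val, by omega⟩
    simp only at this
    rw [← this]
    congr 1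
    exact Fin.ext (by simp; omega)

lemma bp_congr {m : ℕ} (s s' : Finset (Fin (m+1))) (h : s = s')
    (hs : s ⊆ Finset.univ.erase (Fin.last m)) (hs' : s' ⊆ Finset.univ.erase (Fin.last m)) :
    bp s hs = bp s' hs' := by
  subst h
  rfl

lemma main_asc {m k : ℕ} :
    (Finset.univ.filter fun π : Equiv.Perm (Fin (m+1)) =>
      AvoidsAll (permWord π) [[2,1,3],[3,1,2]] ∧ ascents (permWord π) = k).card =
      Nat.choose m k := by
  have htarget : (Finset.powersetCard k (Finset.univ.erase (Fin.last m))).card =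
      Nat.choose m k := by
    rw [Finset.card_powersetCard]
    simp [Finset.card_erase_of_mem]
  rw [← htarget]
  apply Finset.card_bij (fun π _ => Phi π)
  · intro π hπ
    simp only [Finset.mem_filter, Finset.mem_univ, true_and] at hπ
    obtain ⟨hav, hasc⟩ := hπ
    have huni : Uni π := (Q_iff_uni π).mp ((avoid_iff π).mp hav)
    rw [Finset.mem_powersetCard]
    exact ⟨Phi_subset π, by rw [Phi_card, ← ascents_uni π huni, hasc]⟩
  · intro π1 h1 π2 h2 heq
    simp only [Finset.mem_filter, Finset.mem_univ, true_and] at h1 h2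
    have u1 : Uni π1 := (Q_iff_uni π1).mp ((avoid_iff π1).mp h1.1)
    have u2 : Uni π2 := (Q_iff_uni π2).mp ((avoid_iff π2).mp h2.1)
    rw [uni_eq_bp π1 u1, uni_eq_bp π2 u2]
    exact bp_congr _ _ heq _ _
  · intro s hs
    rw [Finset.mem_powersetCard] at hs
    obtain ⟨hsub, hcard⟩ := hs
    refine ⟨bp s hsub, ?_, bp_phi s hsub⟩
    simp only [Finset.mem_filter, Finset.mem_univ, true_and]
    refine ⟨(avoid_iff _).mpr ((Q_iff_uni _).mpr (bp_uni s hsub)), ?_⟩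
    rw [ascents_uni _ (bp_uni s hsub), bp_symm_last s hsub]
    exact hcard

lemma asc_le {m : ℕ} (π : Equiv.Perm (Fin (m+1))) : ascents (permWord π) ≤ m := by
  rw [ascents]
  calc _ ≤ (Finset.range ((permWord π).length - 1)).card := Finset.card_filter_le _ _
  _ = m := by rw [Finset.card_range, permWord_length]; omega

lemma desc_eq {m : ℕ} (π : Equiv.Perm (Fin (m+1))) :
    descents (permWord π) = m - ascents (permWord π) := by
  have key : ((Finset.range ((permWord π).length - 1)).filter
      fun i => (permWord π).getD (i+1) 0 < (permWord π).getD i 0) =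
      ((Finset.range ((permWord π).length - 1)).filter
      fun i => ¬ (permWord π).getD i 0 < (permWord π).getD (i+1) 0) := by
    apply Finset.filter_congr
    intro x hx
    rw [Finset.mem_range, permWord_length] at hx
    have hx1 : x < m + 1 := by omega
    have hx2 : x + 1 < m + 1 := by omega
    rw [permWord_getD π x hx1, permWord_getD π (x+1) hx2]
    have hne : π ⟨x, hx1⟩ ≠ π ⟨x+1, hx2⟩ := by
      intro h
      have h2 : x = x + 1 := π.injective h |> congrArg Fin.val
      omega
    rw [Fin.ne_iff_vne] at hne
    omega
  have hsum := Finset.card_filter_add_card_filter_not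
    (s := Finset.range ((permWord π).length - 1))
    (p := fun i => (permWord π).getD i 0 < (permWord π).getD (i+1) 0)
  have hlen : (permWord π).length - 1 = m := by rw [permWord_length]; omega
  rw [descents, key, ascents, hlen]
  rw [hlen, Finset.card_range] at hsum
  omega

theorem stmt6 (n k : ℕ) (hn : 1 ≤ n) :
    acount n k ascents [[2,1,3],[3,1,2]] = Nat.choose (n - 1) k ∧
    acount n k descents [[2,1,3],[3,1,2]] = Nat.choose (n - 1) k := by
  obtain ⟨m, rfl⟩ : ∃ m, n = m + 1 := ⟨n - 1, by omega⟩
  have hm : m + 1 - 1 = m := rfl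
  rw [hm]
  constructor
  · rw [acount, main_asc]
  · rw [acount]
    by_cases hk : k ≤ m
    · have : (Finset.univ.filter fun π : Equiv.Perm (Fin (m+1)) =>
          AvoidsAll (permWord π) [[2,1,3],[3,1,2]] ∧ descents (permWord π) = k) =
          (Finset.univ.filter fun π : Equiv.Perm (Fin (m+1)) =>
          AvoidsAll (permWord π) [[2,1,3],[3,1,2]] ∧ ascents (permWord π) = m - k) := by
        apply Finset.filter_congr
        intro π _
        have h1 := desc_eq π
        have h2 := asc_le π
        constructor
        · rintro ⟨ha, hd⟩
          exact ⟨ha, by omega⟩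
        · rintro ⟨ha, hd⟩
          exact ⟨ha, by omega⟩
      rw [this, main_asc, Nat.choose_symm hk]
    · have hempty : (Finset.univ.filter fun π : Equiv.Perm (Fin (m+1)) =>
          AvoidsAll (permWord π) [[2,1,3],[3,1,2]] ∧ descents (permWord π) = k) = ∅ := by
        rw [Finset.filter_eq_empty_iff]
        intro π _
        rintro ⟨-, hd⟩
        have h1 := desc_eq π
        have h2 := asc_le π
        omega
      rw [hempty, Finset.card_empty, Nat.choose_eq_zero_of_lt (by omega)]
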